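/- Let k be a natural number, let p₁,…,p_k be distinct primes and n = p₁⋯p_k, and let u, v be positive divisors of n. Then the distance between u and v in the k-dprime divisor function graph Γ_k is 0 if u = v, is 1 if u and v are adjacent, and is 2 otherwise. -/

import Mathlib

/-- The `k`-dprime divisor function graph on the positive divisors of `n`:
two distinct divisors `u`, `v` are adjacent iff `u ∣ v` or `v ∣ u`. -/
def divisorGraph (n : ℕ) : SimpleGraph {d : ℕ // d ∈ n.divisors} where
  Adj u v := u ≠ v ∧ ((u : ℕ) ∣ (v : ℕ) ∨ (v : ℕ) ∣ (u : ℕ))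
  symm := ⟨fun _ _ ⟨h, hd⟩ => ⟨h.symm, hd.symm⟩⟩
  loopless := ⟨fun _ ⟨h, _⟩ => h rfl⟩

instance (n : ℕ) : DecidableRel (divisorGraph n).Adj :=
  fun u v => inferInstanceAs (Decidable (u ≠ v ∧ ((u : ℕ) ∣ (v : ℕ) ∨ (v : ℕ) ∣ (u : ℕ))))

theorem stmt_5 (k : ℕ) (p : Fin k → ℕ) (hp : ∀ i, (p i).Prime)
    (hinj : Function.Injective p) (n : ℕ) (hn : n = ∏ i, p i)
    (u v : ℕ) (hu : u ∈ n.divisors) (hv : v ∈ n.divisors) :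
    (divisorGraph n).dist ⟨u, hu⟩ ⟨v, hv⟩ =
      if u = v then 0
      else if (divisorGraph n).Adj ⟨u, hu⟩ ⟨v, hv⟩ then 1
      else 2 := by
  have hn0 : n ≠ 0 := by
    rw [hn]
    exact Finset.prod_ne_zero_iff.mpr fun i _ => (hp i).pos.ne'
  have h1 : (1 : ℕ) ∈ n.divisors := Nat.one_mem_divisors.mpr hn0
  by_cases heq : u = v
  · simp only [heq, if_pos rfl]
    exact SimpleGraph.dist_self
  · rw [if_neg heq]
    by_cases hadj : (divisorGraph n).Adj ⟨u, hu⟩ ⟨v, hv⟩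
    · rw [if_pos hadj]
      exact SimpleGraph.dist_eq_one_iff_adj.mpr hadj
    · rw [if_neg hadj]
      have hu1 : u ≠ 1 := by
        rintro rfl
        exact hadj ⟨fun h => heq (congrArg Subtype.val h), Or.inl (one_dvd _)⟩
      have hv1 : v ≠ 1 := by
        rintro rfl
        exact hadj ⟨fun h => heq (congrArg Subtype.val h), Or.inr (one_dvd _)⟩
      have a1 : (divisorGraph n).Adj ⟨u, hu⟩ ⟨1, h1⟩ :=
        ⟨fun h => hu1 (congrArg Subtype.val h), Or.inr (one_dvd _)⟩
      have a2 : (divisorGraph n).Adj ⟨1, h1⟩ ⟨v, hv⟩ :=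
        ⟨fun h => hv1 (congrArg Subtype.val h).symm, Or.inl (one_dvd _)⟩
      have w : (divisorGraph n).Walk ⟨u, hu⟩ ⟨v, hv⟩ :=
        (a1.toWalk).append a2.toWalk
      have hle : (divisorGraph n).dist ⟨u, hu⟩ ⟨v, hv⟩ ≤ 2 := by
        simpa using SimpleGraph.dist_le ((a1.toWalk).append a2.toWalk)
      have hpos : 0 < (divisorGraph n).dist ⟨u, hu⟩ ⟨v, hv⟩ :=
        (SimpleGraph.Reachable.pos_dist_of_ne ⟨w⟩
          (fun h => heq (congrArg Subtype.val h)))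
      have hne1 : (divisorGraph n).dist ⟨u, hu⟩ ⟨v, hv⟩ ≠ 1 := fun h =>
        hadj (SimpleGraph.dist_eq_one_iff_adj.mp h)
      omega
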